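/- Let G, F : [0,∞]² → Vec_𝔽 be functors and η : G → F a natural transformation. If G is codegree 1 (takes each square x∧y, x, y, x∨y in [0,∞]² to a pushout of vector spaces) and F is middle-exact, then the objectwise cokernel functor coker(η) : [0,∞]² → Vec_𝔽 is middle-exact. -/

import Mathlib

open CategoryTheory CategoryTheory.Limits

/-- We regard the poset `[0,∞]² = ENNReal × ENNReal` as a category via its
product partial order. -/
noncomputable local instance (priority := 2000) : Category (ENNReal × ENNReal) :=
  Preorder.smallCategory _

/-- A commuting square `α : A ⟶ B`, `f : A ⟶ C`, `g : B ⟶ D`, `β : C ⟶ D`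
(with `α ≫ g = f ≫ β`) is *middle-exact* if the associated complex
`A ⟶ B ⊞ C ⟶ D`, with maps `(α, f)` and `(g, -β)`, is exact in the middle. -/
def MiddleExact {𝒜 : Type*} [Category 𝒜] [Abelian 𝒜] {A B C D : 𝒜}
    (α : A ⟶ B) (f : A ⟶ C) (g : B ⟶ D) (β : C ⟶ D) (w : α ≫ g = f ≫ β) : Prop :=
  (ShortComplex.mk (biprod.lift α f) (biprod.desc g (-β))
    (by simp [biprod.lift_desc, w])).Exact

/-- The square `F(x ⊓ y) → F(x) → F(x ⊔ y)`, `F(x ⊓ y) → F(y) → F(x ⊔ y)` commutes. -/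
theorem squareW {P : Type*} [Lattice P] {𝒜 : Type*} [Category 𝒜] (F : P ⥤ 𝒜) (x y : P) :
    F.map (homOfLE (inf_le_left : x ⊓ y ≤ x)) ≫ F.map (homOfLE (le_sup_left : x ≤ x ⊔ y)) =
      F.map (homOfLE (inf_le_right : x ⊓ y ≤ y)) ≫
        F.map (homOfLE (le_sup_right : y ≤ x ⊔ y)) := by
  rw [← F.map_comp, ← F.map_comp]
  exact congrArg F.map (Subsingleton.elim _ _)

/-- A functor from a lattice to an abelian category is *2-middle-exact* if each
square `F(x ⊓ y), F(x), F(y), F(x ⊔ y)` is middle-exact. -/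
def TwoMiddleExact {P : Type*} [Lattice P] {𝒜 : Type*} [Category 𝒜] [Abelian 𝒜]
    (F : P ⥤ 𝒜) : Prop :=
  ∀ x y : P, MiddleExact (F.map (homOfLE (inf_le_left : x ⊓ y ≤ x)))
    (F.map (homOfLE (inf_le_right : x ⊓ y ≤ y)))
    (F.map (homOfLE (le_sup_left : x ≤ x ⊔ y)))
    (F.map (homOfLE (le_sup_right : y ≤ x ⊔ y))) (squareW F x y)

section ModHelpers
variable {R : Type*} [Ring R] {A B C D : ModuleCat R}

lemma biprod_total_apply (z : (B ⊞ C : ModuleCat R)) :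
    (biprod.inl : B ⟶ B ⊞ C) ((biprod.fst : B ⊞ C ⟶ B) z)
      + (biprod.inr : C ⟶ B ⊞ C) ((biprod.snd : B ⊞ C ⟶ C) z) = z :=
  ConcreteCategory.congr_hom (biprod.total (X := B) (Y := C)) z

lemma middleExact_iff_mod (α : A ⟶ B) (f : A ⟶ C) (g : B ⟶ D) (β : C ⟶ D)
    (w : α ≫ g = f ≫ β) :
    MiddleExact α f g β w ↔
      ∀ (b : B) (c : C), g b = β c → ∃ a : A, α a = b ∧ f a = c := by
  rw [MiddleExact, ShortComplex.moduleCat_exact_iff]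
  have h1 : ∀ b : B, biprod.desc g (-β) ((biprod.inl : B ⟶ B ⊞ C) b) = g b := fun b =>
    ConcreteCategory.congr_hom (biprod.inl_desc g (-β)) b
  have h2 : ∀ c : C, biprod.desc g (-β) ((biprod.inr : C ⟶ B ⊞ C) c) = -(β c) := fun c =>
    ConcreteCategory.congr_hom (biprod.inr_desc g (-β)) c
  have l1 : ∀ a : A, (biprod.fst : B ⊞ C ⟶ B) (biprod.lift α f a) = α a := fun a =>
    ConcreteCategory.congr_hom (biprod.lift_fst α f) a
  have l2 : ∀ a : A, (biprod.snd : B ⊞ C ⟶ C) (biprod.lift α f a) = f a := fun a =>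
    ConcreteCategory.congr_hom (biprod.lift_snd α f) a
  have if1 : ∀ b : B, (biprod.fst : B ⊞ C ⟶ B) ((biprod.inl : B ⟶ B ⊞ C) b) = b := fun b =>
    ConcreteCategory.congr_hom (biprod.inl_fst (X := B) (Y := C)) b
  have if2 : ∀ c : C, (biprod.fst : B ⊞ C ⟶ B) ((biprod.inr : C ⟶ B ⊞ C) c) = 0 := fun c =>
    ConcreteCategory.congr_hom (biprod.inr_fst (X := B) (Y := C)) c
  have is1 : ∀ b : B, (biprod.snd : B ⊞ C ⟶ C) ((biprod.inl : B ⟶ B ⊞ C) b) = 0 := fun b =>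
    ConcreteCategory.congr_hom (biprod.inl_snd (X := B) (Y := C)) b
  have is2 : ∀ c : C, (biprod.snd : B ⊞ C ⟶ C) ((biprod.inr : C ⟶ B ⊞ C) c) = c := fun c =>
    ConcreteCategory.congr_hom (biprod.inr_snd (X := B) (Y := C)) c
  constructor
  · intro h b c hbc
    obtain ⟨a, ha⟩ := h ((biprod.inl : B ⟶ B ⊞ C) b + (biprod.inr : C ⟶ B ⊞ C) c)
      (by show biprod.desc g (-β) _ = 0
          rw [map_add, h1, h2, hbc, add_neg_cancel])
    replace ha : biprod.lift α f a = (biprod.inl : B ⟶ B ⊞ C) b + (biprod.inr : C ⟶ B ⊞ C) c := ha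
    refine ⟨a, ?_, ?_⟩
    · have := congrArg (biprod.fst : B ⊞ C ⟶ B) ha
      rw [l1, map_add, if1, if2, add_zero] at this
      exact this
    · have := congrArg (biprod.snd : B ⊞ C ⟶ C) ha
      rw [l2, map_add, is1, is2, zero_add] at this
      exact this
  · intro h z hz
    replace hz : biprod.desc g (-β) z = 0 := hz
    have hzd : g ((biprod.fst : B ⊞ C ⟶ B) z) = β ((biprod.snd : B ⊞ C ⟶ C) z) := by
      have := congrArg (biprod.desc g (-β)) (biprod_total_apply z)
      rw [map_add, h1, h2, hz, add_neg_eq_zero] at this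
      exact this
    obtain ⟨a, ha1, ha2⟩ := h _ _ hzd
    refine ⟨a, ?_⟩
    show biprod.lift α f a = z
    rw [← biprod_total_apply z, ← biprod_total_apply (biprod.lift α f a), l1, l2, ha1, ha2]

lemma desc_apply_total {R : Type*} [Ring R] {B C D : ModuleCat R}
    (g : B ⟶ D) (k : C ⟶ D) (z : (B ⊞ C : ModuleCat R)) :
    biprod.desc g k z = g ((biprod.fst : B ⊞ C ⟶ B) z) + k ((biprod.snd : B ⊞ C ⟶ C) z) := by
  have h1 : ∀ b : B, biprod.desc g k ((biprod.inl : B ⟶ B ⊞ C) b) = g b := fun b =>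
    ConcreteCategory.congr_hom (biprod.inl_desc g k) b
  have h2 : ∀ c : C, biprod.desc g k ((biprod.inr : C ⟶ B ⊞ C) c) = k c := fun c =>
    ConcreteCategory.congr_hom (biprod.inr_desc g k) c
  conv_lhs => rw [← biprod_total_apply z]
  rw [map_add, h1, h2]

end ModHelpers

/-- Let `G, F : [0,∞]² → Vec_𝔽` and `η : G ⟶ F`. If `G` is codegree 1 (each square
`G(p ⊓ q), G(p), G(q), G(p ⊔ q)` is a pushout) and `F` is middle-exact, then the
objectwise cokernel of `η` is middle-exact. -/
theorem cokernel_middleExact {𝔽 : Type*} [Field 𝔽]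
    (G F : ENNReal × ENNReal ⥤ ModuleCat 𝔽) (η : G ⟶ F)
    (hG : ∀ p q : ENNReal × ENNReal, IsPushout (G.map (homOfLE (inf_le_left : p ⊓ q ≤ p)))
      (G.map (homOfLE (inf_le_right : p ⊓ q ≤ q)))
      (G.map (homOfLE (le_sup_left : p ≤ p ⊔ q)))
      (G.map (homOfLE (le_sup_right : q ≤ p ⊔ q))))
    (hF : TwoMiddleExact F) :
    TwoMiddleExact (cokernel η) := by
  intro p q
  set π : F ⟶ cokernel η := cokernel.π η with hπdef
  -- surjectivity of π pointwise
  have hπsurj : ∀ x : ENNReal × ENNReal, Function.Surjective (π.app x) := by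
    intro x
    rw [← ModuleCat.epi_iff_surjective]
    exact ((evaluation (ENNReal × ENNReal) (ModuleCat 𝔽)).obj x).map_epi π
  -- exactness of (η.app x, π.app x)
  have hker : ∀ (x : ENNReal × ENNReal) (a : F.obj x), π.app x a = 0 →
      ∃ gg : G.obj x, η.app x gg = a := by
    intro x
    have hex : (ShortComplex.mk η π (cokernel.condition η)).Exact :=
      ShortComplex.exact_cokernel η
    have hex2 := hex.map ((evaluation (ENNReal × ENNReal) (ModuleCat 𝔽)).obj x)
    rw [ShortComplex.moduleCat_exact_iff] at hex2
    exact fun a ha => hex2 a ha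
  -- π kills the image of η
  have hπη : ∀ (x : ENNReal × ENNReal) (u : G.obj x), π.app x (η.app x u) = 0 := by
    intro x u
    have h0 : η.app x ≫ π.app x = 0 := by
      rw [← NatTrans.comp_app, cokernel.condition η, zero_app]
    exact ConcreteCategory.congr_hom h0 u
  -- surjectivity from the pushout
  have hGsurj : ∀ d : G.obj (p ⊔ q), ∃ (u : G.obj p) (v : G.obj q),
      G.map (homOfLE (le_sup_left : p ≤ p ⊔ q)) u
        + G.map (homOfLE (le_sup_right : q ≤ p ⊔ q)) v = d := by
    let sq : Square (ModuleCat 𝔽) :=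
      { X₁ := G.obj (p ⊓ q), X₂ := G.obj p, X₃ := G.obj q, X₄ := G.obj (p ⊔ q),
        f₁₂ := G.map (homOfLE inf_le_left), f₁₃ := G.map (homOfLE inf_le_right),
        f₂₄ := G.map (homOfLE le_sup_left), f₃₄ := G.map (homOfLE le_sup_right),
        fac := squareW G p q }
    have hsq : sq.IsPushout := hG p q
    have hepi : Epi (biprod.desc sq.f₂₄ sq.f₃₄) :=
      epi_of_isColimit_cofork hsq.isColimitCokernelCofork
    rw [ModuleCat.epi_iff_surjective] at hepi
    intro d
    obtain ⟨z, hz⟩ := hepi d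
    exact ⟨_, _, by rw [← desc_apply_total sq.f₂₄ sq.f₃₄ z]; exact hz⟩
  rw [middleExact_iff_mod]
  intro b c hbc
  obtain ⟨b', rfl⟩ := hπsurj p b
  obtain ⟨c', rfl⟩ := hπsurj q c
  -- naturality facts
  have nat : ∀ {x y : ENNReal × ENNReal} (h : x ⟶ y) (a : F.obj x),
      (cokernel η).map h (π.app x a) = π.app y (F.map h a) := fun h a =>
    (ConcreteCategory.congr_hom (π.naturality h) a).symm
  have natη : ∀ {x y : ENNReal × ENNReal} (h : x ⟶ y) (u : G.obj x),
      η.app y (G.map h u) = F.map h (η.app x u) := fun h u =>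
    ConcreteCategory.congr_hom (η.naturality h) u
  have h0 : π.app (p ⊔ q)
      (F.map (homOfLE (le_sup_left : p ≤ p ⊔ q)) b'
        - F.map (homOfLE (le_sup_right : q ≤ p ⊔ q)) c') = 0 := by
    rw [map_sub, ← nat, ← nat, hbc, sub_self]
  obtain ⟨d, hd⟩ := hker _ _ h0
  obtain ⟨u, v, huv⟩ := hGsurj d
  set b'' := b' - η.app p u with hb''
  set c'' := c' + η.app q v with hc''
  have hmid : F.map (homOfLE (le_sup_left : p ≤ p ⊔ q)) b''
      = F.map (homOfLE (le_sup_right : q ≤ p ⊔ q)) c'' := by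
    have hδ := congrArg (η.app (p ⊔ q)) huv
    rw [map_add, natη, natη, hd] at hδ
    rw [hb'', hc'', map_sub, map_add, ← sub_eq_zero]
    have e : ∀ X A Y B : F.obj (p ⊔ q), X - A - (Y + B) = X - Y - (A + B) := by
      intros; abel
    rw [e, ← hδ, sub_self]
  obtain ⟨a, ha1, ha2⟩ := (middleExact_iff_mod _ _ _ _ (squareW F p q)).mp (hF p q) b'' c'' hmid
  refine ⟨π.app (p ⊓ q) a, ?_, ?_⟩
  · rw [nat, ha1, hb'', map_sub, hπη, sub_zero]
  · rw [nat, ha2, hc'', map_add, hπη, add_zero]
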